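/- arXiv:2110.00960 — 5 statements merged into one kernel-verified Lean document; each statement's English description precedes it below -/
import Mathlib

section
/- In any window of 2f+1 consecutive rounds, there exists a round r in the window such that both r and r+1 are assigned honest leaders by the round-robin rule (leader of round r is party r mod n), provided n = 3f+1 and at most f parties are Byzantine. -/
open Fin.NatCast

lemma stmt1_cancel (n R x y : ℕ) (hx : x < n) (hy : y < n)
    (h : (R + x) % n = (R + y) % n) : x = y := by
  have h1 : (R + x) ≡ (R + y) [MOD n] := h
  have h2 : x ≡ y [MOD n] := Nat.ModEq.add_left_cancel' R h1
  have h3 : x % n = y % n := h2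
  have hx' : x % n = x := Nat.mod_eq_of_lt hx
  have hy' : y % n = y := Nat.mod_eq_of_lt hy
  omega

/-- In any window of 2f+1 consecutive rounds there is a round r such that
both r and r+1 have honest round-robin leaders (leader of round r is
r mod n, n = 3f+1, at most f Byzantine parties). -/
theorem stmt1 (f : ℕ) (hf : 1 ≤ f) (B : Finset (Fin (3*f+1)))
    (hB : B.card ≤ f) (R : ℕ) :
    ∃ r, R ≤ r ∧ r + 1 ≤ R + 2*f + 1 ∧
      (↑r : Fin (3*f+1)) ∉ B ∧ (↑(r+1) : Fin (3*f+1)) ∉ B := by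
  by_contra hcon
  push_neg at hcon
  have hval : ∀ m : ℕ, ((↑m : Fin (3*f+1)) : ℕ) = m % (3*f+1) := fun m =>
    Fin.val_natCast m (3*f+1)
  let c : ℕ → Fin (3*f+1) := fun k =>
    if (↑(R+2*k) : Fin (3*f+1)) ∈ B then ↑(R+2*k) else ↑(R+2*k+1)
  have hmem : ∀ k ∈ Finset.range (f+1), c k ∈ B := by
    intro k hk
    simp only [Finset.mem_range] at hk
    have hh := hcon (R + 2*k) (by omega) (by omega)
    by_cases hcase : (↑(R+2*k) : Fin (3*f+1)) ∈ B
    · simp only [c, if_pos hcase]; exact hcase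
    · simp only [c, if_neg hcase]; exact hh hcase
  have hinj : Set.InjOn c ↑(Finset.range (f+1)) := by
    intro k hk j hj hkj
    simp only [Finset.coe_range, Set.mem_Iio] at hk hj
    have key : ∀ a b : ℕ, a ≤ 1 → b ≤ 1 →
        (↑(R+2*k+a) : Fin (3*f+1)) = ↑(R+2*j+b) → k = j := by
      intro a b ha hb heq
      have hv := congrArg Fin.val heq
      rw [hval, hval] at hv
      have h2k : 2*k+a < 3*f+1 := by omega
      have h2j : 2*j+b < 3*f+1 := by omega
      have := stmt1_cancel (3*f+1) R (2*k+a) (2*j+b) h2k h2j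
        (by rw [Nat.add_assoc, Nat.add_assoc] at hv; exact hv)
      omega
    by_cases h1 : (↑(R+2*k) : Fin (3*f+1)) ∈ B <;>
      by_cases h2 : (↑(R+2*j) : Fin (3*f+1)) ∈ B <;>
      simp only [c, h1, h2, if_true, if_false] at hkj
    · exact key 0 0 (by omega) (by omega) (by simpa using hkj)
    · exact key 0 1 (by omega) (by omega) (by simpa using hkj)
    · exact key 1 0 (by omega) (by omega) (by simpa using hkj)
    · exact key 1 1 (by omega) (by omega) (by simpa using hkj)
  have hcard := Finset.card_le_card_of_injOn c hmem hinj
  simp only [Finset.card_range] at hcard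
  omega
end

section
/- In any window of 3f+1 consecutive rounds with round-robin leader assignment (leader of round r is r mod n, n = 3f+1, at most f Byzantine parties), there are at least f rounds r in the window such that both r-1 and r have honest leaders. -/
open Fin.NatCast

private lemma mod_inj_aux {n a b : ℕ} (h : a % n = b % n) (hab : a ≤ b)
    (hb : b < a + n) : a = b := by
  have hd : n ∣ b - a := (Nat.modEq_iff_dvd' hab).mp h
  rcases Nat.eq_zero_or_pos (b - a) with h0 | h0
  · omega
  · have := Nat.le_of_dvd h0 hd
    omega

/-- In the window [R+1, R+3f] of 3f consecutive rounds with round-robin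
leaders (leader of round r is r mod n, n = 3f+1, at most f Byzantine),
at least f rounds r have both r-1 and r with honest leaders. -/
theorem stmt2 (f : ℕ) (hf : 1 ≤ f) (B : Finset (Fin (3*f+1)))
    (hB : B.card ≤ f) (R : ℕ) :
    f ≤ ((Finset.Icc (R+1) (R+3*f)).filter
      (fun (r : ℕ) => (↑(r-1) : Fin (3*f+1)) ∉ B ∧ (↑r : Fin (3*f+1)) ∉ B)).card := by
  set S := Finset.Icc (R+1) (R+3*f) with hS
  have hScard : S.card = 3*f := by
    rw [hS, Nat.card_Icc]; omega
  have hkey := Finset.card_filter_add_card_filter_not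
    (s := S) (p := fun (r : ℕ) => (↑(r-1) : Fin (3*f+1)) ∉ B ∧ (↑r : Fin (3*f+1)) ∉ B)
  -- bound the bad set
  have hbad : (S.filter (fun (r : ℕ) => ¬((↑(r-1) : Fin (3*f+1)) ∉ B ∧ (↑r : Fin (3*f+1)) ∉ B))).card ≤ 2*f := by
    have hsub : S.filter (fun (r : ℕ) => ¬((↑(r-1) : Fin (3*f+1)) ∉ B ∧ (↑r : Fin (3*f+1)) ∉ B)) ⊆
        (S.filter (fun (r : ℕ) => (↑(r-1) : Fin (3*f+1)) ∈ B)) ∪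
        (S.filter (fun (r : ℕ) => (↑r : Fin (3*f+1)) ∈ B)) := by
      intro r hr
      simp only [Finset.mem_filter, Finset.mem_union] at hr ⊢
      tauto
    have h1 : (S.filter (fun (r : ℕ) => (↑(r-1) : Fin (3*f+1)) ∈ B)).card ≤ f := by
      refine le_trans (Finset.card_le_card_of_injOn (fun (r : ℕ) => (↑(r-1) : Fin (3*f+1))) ?_ ?_) hB
      · intro r hr; exact (Finset.mem_filter.mp hr).2
      · intro a ha b hb hab
        simp only [Finset.coe_filter, Set.mem_setOf_eq, hS, Finset.mem_Icc] at ha hb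
        have hva := congrArg Fin.val hab
        rw [Fin.val_natCast, Fin.val_natCast] at hva
        rcases le_or_gt a b with h | h
        · have := mod_inj_aux (a := a-1) (b := b-1) hva (by omega) (by omega); omega
        · have := mod_inj_aux (a := b-1) (b := a-1) hva.symm (by omega) (by omega); omega
    have h2 : (S.filter (fun (r : ℕ) => (↑r : Fin (3*f+1)) ∈ B)).card ≤ f := by
      refine le_trans (Finset.card_le_card_of_injOn (fun (r : ℕ) => (↑r : Fin (3*f+1))) ?_ ?_) hB
      · intro r hr; exact (Finset.mem_filter.mp hr).2
      · intro a ha b hb hab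
        simp only [Finset.coe_filter, Set.mem_setOf_eq, hS, Finset.mem_Icc] at ha hb
        have hva := congrArg Fin.val hab
        rw [Fin.val_natCast, Fin.val_natCast] at hva
        rcases le_or_gt a b with h | h
        · exact mod_inj_aux hva h (by omega)
        · exact (mod_inj_aux hva.symm (le_of_lt h) (by omega)).symm
    calc _ ≤ _ := Finset.card_le_card hsub
    _ ≤ _ := Finset.card_union_le _ _
    _ ≤ 2*f := by omega
  omega
end

section
/- Within any f+2 consecutive rounds in which no party crashes and leaders are deterministically agreed upon by all honest parties, there must be a round whose chosen leader is alive, given that: leaders are chosen by a function of the round; at most f parties have crashed before the window; and whenever a round's leader is crashed, the next round's leader is chosen round-robin among all n = 3f+1 parties (advancing by one each round). Formally: if a function ℓ : ℕ → Fin n satisfies ℓ(r+1) = (ℓ(r) + 1) mod n whenever ℓ(r) is in a crashed set C with |C| ≤ f, then for any starting round R there exists r ∈ [R, R+f+1] with ℓ(r) ∉ C. -/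
open Fin.NatCast Fin.CommRing
/-- In any f+2 consecutive rounds a round with an alive leader exists:
if whenever the leader of round r is crashed the next round's leader
advances round-robin by one (mod n = 3f+1), and at most f parties are
crashed, then in [R, R+f+1] some round has a non-crashed leader. -/
theorem stmt6 (f : ℕ) (C : Finset (Fin (3*f+1))) (hC : C.card ≤ f)
    (ℓ : ℕ → Fin (3*f+1))
    (hstep : ∀ r, ℓ r ∈ C → ℓ (r+1) = ℓ r + 1) (R : ℕ) :
    ∃ r, R ≤ r ∧ r ≤ R + f + 1 ∧ ℓ r ∉ C := by
  by_contra h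
  push_neg at h
  have hall : ∀ i, i ≤ f + 1 → ℓ (R + i) ∈ C := by
    intro i hi
    by_contra hni
    exact hni (h (R + i) (Nat.le_add_right _ _) (by omega) )
  have hstep' : ∀ i, i ≤ f + 1 → ℓ (R + i) = ℓ R + (i : Fin (3*f+1)) := by
    intro i hi
    induction i with
    | zero => simp
    | succ k ih =>
      have hk : k ≤ f + 1 := by omega
      have := hstep (R + k) (hall k hk)
      rw [show R + (k+1) = (R + k) + 1 from rfl, this, ih hk]
      push_cast
      ring
  have hsub : (Finset.range (f+1)).image (fun i : ℕ => ℓ R + (i : Fin (3*f+1))) ⊆ C := by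
    intro x hx
    simp only [Finset.mem_image, Finset.mem_range] at hx
    obtain ⟨i, hi, rfl⟩ := hx
    rw [← hstep' i (by omega)]
    exact hall i (by omega)
  have hinj : Set.InjOn (fun i : ℕ => ℓ R + (i : Fin (3*f+1))) (Finset.range (f+1)) := by
    intro a ha b hb hab
    simp only [Finset.coe_range, Set.mem_Iio] at ha hb
    have : (a : Fin (3*f+1)) = (b : Fin (3*f+1)) := add_left_cancel hab
    have hv := congrArg Fin.val this
    simpa [Fin.val_natCast, Nat.mod_eq_of_lt (by omega : a < 3*f+1),
      Nat.mod_eq_of_lt (by omega : b < 3*f+1)] using hv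
  have hcard := Finset.card_le_card hsub
  rw [Finset.card_image_of_injOn hinj, Finset.card_range] at hcard
  omega
end

section
/- If in every window of 5f+3 consecutive rounds after some round G at least one honest block is committed, then the proportion of Byzantine blocks among committed blocks with round numbers in [G, G+m(5f+3)) is at most 1 - m/(total committed blocks in that range); in particular, among any N ≥ 5f+3 consecutive rounds after G, the number of honest committed blocks is at least ⌊N/(5f+3)⌋. -/
open Classical in
/-- If in every window of 5f+3 consecutive rounds after round G at least one
honest block is committed, then in any interval of N consecutive rounds
starting at or after G, at least ⌊N/(5f+3)⌋ honest blocks are committed. -/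
theorem stmt7 {Block : Type*} (f G : ℕ)
    (commit : ℕ → Option Block) (honest : Block → Prop)
    (h : ∀ r, G ≤ r → ∃ r', r ≤ r' ∧ r' ≤ r + 5*f + 2 ∧
      ∃ b, commit r' = some b ∧ honest b)
    (s N : ℕ) (hs : G ≤ s) :
    N / (5*f + 3) ≤
      ((Finset.Ico s (s + N)).filter
        (fun r' => ∃ b, commit r' = some b ∧ honest b)).card := by
  induction N using Nat.strong_induction_on generalizing s with
  | _ N ih =>
    by_cases hN : N < 5*f + 3
    · simp [Nat.div_eq_of_lt hN]
    · push_neg at hN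
      obtain ⟨r', hr1, hr2, hb⟩ := h s hs
      have hmem : r' ∈ (Finset.Ico s (s + (5*f+3))).filter
          (fun r' => ∃ b, commit r' = some b ∧ honest b) := by
        refine Finset.mem_filter.mpr ⟨Finset.mem_Ico.mpr ⟨hr1, by omega⟩, hb⟩
      have h1 : 1 ≤ ((Finset.Ico s (s + (5*f+3))).filter
          (fun r' => ∃ b, commit r' = some b ∧ honest b)).card :=
        Finset.card_pos.mpr ⟨r', hmem⟩
      have h2 := ih (N - (5*f+3)) (by omega) (s + (5*f+3)) (by omega)
      have heq : s + (5*f+3) + (N - (5*f+3)) = s + N := by omega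
      rw [heq] at h2
      have hsplit : Finset.Ico s (s + N) =
          Finset.Ico s (s + (5*f+3)) ∪ Finset.Ico (s + (5*f+3)) (s + N) :=
        (Finset.Ico_union_Ico_eq_Ico (by omega) (by omega)).symm
      have hdisj : Disjoint
          ((Finset.Ico s (s + (5*f+3))).filter
            (fun r' => ∃ b, commit r' = some b ∧ honest b))
          (((Finset.Ico (s + (5*f+3))) (s + N)).filter
            (fun r' => ∃ b, commit r' = some b ∧ honest b)) :=
        Finset.disjoint_filter_filter (Finset.Ico_disjoint_Ico_consecutive _ _ _)
      have hcard : ((Finset.Ico s (s + N)).filter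
          (fun r' => ∃ b, commit r' = some b ∧ honest b)).card =
          ((Finset.Ico s (s + (5*f+3))).filter
            (fun r' => ∃ b, commit r' = some b ∧ honest b)).card +
          ((Finset.Ico (s + (5*f+3)) (s + N)).filter
            (fun r' => ∃ b, commit r' = some b ∧ honest b)).card := by
        rw [hsplit, Finset.filter_union, Finset.card_union_of_disjoint hdisj]
      have hdiv : N / (5*f+3) = (N - (5*f+3)) / (5*f+3) + 1 :=
        Nat.div_eq_sub_div (by omega) hN
      omega
end

section
/- Bounded-skip composition: if rounds are partitioned so that (a) within each maximal crash-free stretch after the first f+2 rounds of the stretch, every round commits a block, and (b) there are at most f crash events, then the total number of non-committing rounds is at most f·(f+4) + (f+4) = (f+1)(f+4), i.e., O(f^2). -/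
open Classical in
/-- Bounded-skip composition: crashes occur at rounds in a set K with
|K| ≤ f; within any crash-free interval every round except possibly the
first f+2 commits a block ('productive'). Then for every horizon N the
number of non-productive rounds is at most (f+1)(f+4). -/
theorem stmt17 (f : ℕ) (K : Finset ℕ) (hK : K.card ≤ f)
    (productive : ℕ → Prop)
    (h : ∀ a b : ℕ, (∀ x ∈ Finset.Icc a b, x ∉ K) →
      ∀ x ∈ Finset.Icc a b, a + f + 2 ≤ x → productive x) :
    ∀ N : ℕ, ((Finset.range N).filter (fun x => ¬ productive x)).card
      ≤ (f+1) * (f+4) := by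
  intro N
  set A : Finset ℕ := insert 0 (K.image (·+1)) with hA
  have hsub : (Finset.range N).filter (fun x => ¬ productive x) ⊆
      K ∪ A.biUnion (fun a => Finset.Icc a (a+f+1)) := by
    intro x hx
    obtain ⟨-, hnp⟩ := Finset.mem_filter.mp hx
    by_cases hxK : x ∈ K
    · exact Finset.mem_union_left _ hxK
    · refine Finset.mem_union_right _ ?_
      set S := K.filter (· < x) with hS
      by_cases hSne : S.Nonempty
      · set a := S.max' hSne + 1 with ha
        have hmem := S.max'_mem hSne
        have hax : a ≤ x := Nat.succ_le_of_lt (by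
          have := (Finset.mem_filter.mp hmem).2
          simpa using this)
        have hfree : ∀ y ∈ Finset.Icc a x, y ∉ K := by
          intro y hy hyK
          rw [Finset.mem_Icc] at hy
          have hyx : y < x := lt_of_le_of_ne hy.2 (by rintro rfl; exact hxK hyK)
          have hle : y ≤ S.max' hSne := S.le_max' y (Finset.mem_filter.mpr ⟨hyK, by simpa using hyx⟩)
          omega
        have hp := h a x hfree x (Finset.mem_Icc.mpr ⟨hax, le_refl x⟩)
        have hxb : x ≤ a + f + 1 := by by_contra hc; exact hnp (hp (by omega))
        refine Finset.mem_biUnion.mpr ⟨a, ?_, Finset.mem_Icc.mpr ⟨hax, by omega⟩⟩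
        exact Finset.mem_insert_of_mem (Finset.mem_image.mpr
          ⟨_, (Finset.mem_filter.mp hmem).1, rfl⟩)
      · have hfree : ∀ y ∈ Finset.Icc 0 x, y ∉ K := by
          intro y hy hyK
          rw [Finset.mem_Icc] at hy
          have hyx : y < x := lt_of_le_of_ne hy.2 (by rintro rfl; exact hxK hyK)
          exact hSne ⟨y, Finset.mem_filter.mpr ⟨hyK, by simpa using hyx⟩⟩
        have hp := h 0 x hfree x (Finset.mem_Icc.mpr ⟨Nat.zero_le x, le_refl x⟩)
        have hxb : x ≤ f + 1 := by by_contra hc; exact hnp (hp (by omega))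
        exact Finset.mem_biUnion.mpr ⟨0, Finset.mem_insert_self _ _,
          Finset.mem_Icc.mpr ⟨Nat.zero_le x, by omega⟩⟩
  have hAcard : A.card ≤ f + 1 := by
    calc A.card ≤ (K.image (·+1)).card + 1 := Finset.card_insert_le _ _
      _ ≤ f + 1 := by have := Finset.card_image_le (f := (·+1)) (s := K); omega
  have hB : (A.biUnion (fun a => Finset.Icc a (a+f+1))).card ≤ (f+1) * (f+2) := by
    calc (A.biUnion (fun a => Finset.Icc a (a+f+1))).card
        ≤ ∑ a ∈ A, (Finset.Icc a (a+f+1)).card := Finset.card_biUnion_le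
      _ = ∑ a ∈ A, (f+2) := by
          apply Finset.sum_congr rfl; intro a _; rw [Nat.card_Icc]; omega
      _ = A.card * (f+2) := by rw [Finset.sum_const, smul_eq_mul]
      _ ≤ (f+1) * (f+2) := by gcongr
  calc ((Finset.range N).filter (fun x => ¬ productive x)).card
      ≤ (K ∪ A.biUnion (fun a => Finset.Icc a (a+f+1))).card := Finset.card_le_card hsub
    _ ≤ K.card + (A.biUnion (fun a => Finset.Icc a (a+f+1))).card := Finset.card_union_le _ _
    _ ≤ f + (f+1) * (f+2) := by gcongr
    _ ≤ (f+1) * (f+4) := by nlinarith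
end
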